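/- The automorphism group of the Petersen graph is isomorphic to the symmetric group S_5. -/

import Mathlib

/-- Vertices of the Petersen graph: 2-element subsets of `{1,…,5}`. -/
abbrev PetersenV := {s : Finset (Fin 5) // s.card = 2}

/-- The Petersen graph: two 2-element subsets of `{1,…,5}` are adjacent exactly when they
are disjoint. -/
def Petersen : SimpleGraph PetersenV where
  Adj s t := Disjoint s.1 t.1
  symm := ⟨fun s t h => h.symm⟩
  loopless := by
    constructor
    intro s h
    have h0 : s.1 = ⊥ := disjoint_self.mp h
    have h2 := s.2
    rw [h0] at h2
    simp at h2

/-- The natural action of a permutation of `Fin 5` on the Petersen graph. -/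
def petmap (σ : Equiv.Perm (Fin 5)) : Petersen ≃g Petersen where
  toEquiv := (σ.finsetCongr).subtypeEquiv (by intro s; simp)
  map_rel_iff' := by
    intro a b
    show Disjoint (a.1.map σ.toEmbedding) (b.1.map σ.toEmbedding) ↔ Disjoint a.1 b.1
    exact Finset.disjoint_map _

lemma petmap_apply (σ : Equiv.Perm (Fin 5)) (s : PetersenV) :
    (petmap σ s).1 = s.1.image σ := by
  show s.1.map σ.toEmbedding = s.1.image σ
  simp [Finset.map_eq_image]

set_option synthInstance.maxHeartbeats 1000000 in
set_option synthInstance.maxSize 512 in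
set_option maxHeartbeats 4000000 in
lemma pet_quad : ∀ i : Fin 5,
    ∃ a b c d : PetersenV, a ≠ b ∧ a ≠ c ∧ a ≠ d ∧ b ≠ c ∧ b ≠ d ∧ c ≠ d ∧
      i ∈ a.1 ∧ i ∈ b.1 ∧ i ∈ c.1 ∧ i ∈ d.1 ∧
      (∀ s : PetersenV, i ∈ s.1 → s = a ∨ s = b ∨ s = c ∨ s = d) := by decide

set_option synthInstance.maxHeartbeats 1000000 in
set_option synthInstance.maxSize 512 in
set_option maxHeartbeats 8000000 in
lemma pet_key : ∀ a b c d : PetersenV, a ≠ b → a ≠ c → a ≠ d → b ≠ c → b ≠ d → c ≠ d →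
    ¬ Disjoint a.1 b.1 → ¬ Disjoint a.1 c.1 → ¬ Disjoint a.1 d.1 →
    ¬ Disjoint b.1 c.1 → ¬ Disjoint b.1 d.1 → ¬ Disjoint c.1 d.1 →
    ∃ p : Fin 5, p ∈ a.1 ∧ p ∈ b.1 ∧ p ∈ c.1 ∧ p ∈ d.1 := by decide

set_option maxHeartbeats 2000000 in
lemma pet_sep : ∀ i j : Fin 5, i ≠ j → ∃ t u : PetersenV,
    i ∈ t.1 ∧ j ∈ u.1 ∧ Disjoint t.1 u.1 := by decide

lemma card_two_eq (s : Finset (Fin 5)) (hs : s.card = 2) {p q : Fin 5}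
    (hpq : p ≠ q) (hp : p ∈ s) (hq : q ∈ s) : s = {p, q} := by
  have hsub : ({p, q} : Finset (Fin 5)) ⊆ s := by
    intro x hx
    rcases Finset.mem_insert.mp hx with h | h
    · rwa [h]
    · rw [Finset.mem_singleton.mp h]; exact hq
  refine (Finset.eq_of_subset_of_card_le hsub ?_).symm
  rw [hs, Finset.card_pair hpq]

/-- Every automorphism of the Petersen graph is induced by a permutation of `Fin 5`. -/
lemma petmap_surjective : Function.Surjective petmap := by
  intro f
  -- f preserves non-disjointness
  have ndis : ∀ a b : PetersenV, ¬ Disjoint a.1 b.1 → ¬ Disjoint (f a).1 (f b).1 := by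
    intro a b h h2
    exact h (f.map_rel_iff.mp h2)
  -- f preserves disjointness
  have dis : ∀ a b : PetersenV, Disjoint a.1 b.1 → Disjoint (f a).1 (f b).1 := by
    intro a b h
    exact f.map_rel_iff.mpr h
  -- for each i there is a unique common point of the images of all vertices containing i
  have hEU : ∀ i : Fin 5, ∃! p : Fin 5, ∀ s : PetersenV, i ∈ s.1 → p ∈ (f s).1 := by
    intro i
    obtain ⟨a, b, c, d, hab, hac, had, hbc, hbd, hcd, hia, hib, hic, hid, hall⟩ := pet_quad i
    have nd : ∀ x y : PetersenV, i ∈ x.1 → i ∈ y.1 → ¬ Disjoint (f x).1 (f y).1 := by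
      intro x y hx hy
      exact ndis x y (Finset.not_disjoint_iff.mpr ⟨i, hx, hy⟩)
    obtain ⟨p, hpa, hpb, hpc, hpd⟩ :=
      pet_key (f a) (f b) (f c) (f d)
        (fun h => hab (f.injective h)) (fun h => hac (f.injective h))
        (fun h => had (f.injective h)) (fun h => hbc (f.injective h))
        (fun h => hbd (f.injective h)) (fun h => hcd (f.injective h))
        (nd a b hia hib) (nd a c hia hic) (nd a d hia hid)
        (nd b c hib hic) (nd b d hib hid) (nd c d hic hid)
    refine ⟨p, ?_, ?_⟩
    · intro s hs
      rcases hall s hs with h | h | h | h <;> subst h <;> assumption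
    · intro q hq
      by_contra hqp
      have hqa := hq a hia
      have hqb := hq b hib
      have h1 : (f a).1 = {q, p} := card_two_eq _ (f a).2 hqp hqa hpa
      have h2 : (f b).1 = {q, p} := card_two_eq _ (f b).2 hqp hqb hpb
      exact hab (f.injective (Subtype.ext (h1.trans h2.symm)))
  choose g hg hgu using hEU
  -- g is injective
  have ginj : Function.Injective g := by
    intro i j hij
    by_contra hne
    obtain ⟨t, u, hit, hju, htu⟩ := pet_sep i j hne
    have hd := dis t u htu
    have h1 : g i ∈ (f t).1 := hg i t hit
    have h2 : g j ∈ (f u).1 := hg j u hju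
    rw [hij] at h1
    exact (Finset.disjoint_left.mp hd h1) h2
  -- f acts as the image under g
  have main : ∀ s : PetersenV, (f s).1 = s.1.image g := by
    intro s
    obtain ⟨i, j, hij, hs⟩ := Finset.card_eq_two.mp s.2
    have hi : i ∈ s.1 := by rw [hs]; exact Finset.mem_insert_self _ _
    have hj : j ∈ s.1 := by rw [hs]; simp
    have h1 : g i ∈ (f s).1 := hg i s hi
    have h2 : g j ∈ (f s).1 := hg j s hj
    have hgij : g i ≠ g j := fun h => hij (ginj h)
    have h3 : (f s).1 = {g i, g j} := card_two_eq _ (f s).2 hgij h1 h2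
    rw [h3, hs]
    simp [Finset.image_insert]
  refine ⟨Equiv.ofBijective g (Finite.injective_iff_bijective.mp ginj), ?_⟩
  apply RelIso.ext
  intro s
  apply Subtype.ext
  rw [petmap_apply]
  exact (main s).symm

lemma petmap_injective : Function.Injective petmap := by
  intro σ τ h
  apply Equiv.ext
  intro i
  obtain ⟨j, k, hij, hik, hjk⟩ : ∃ j k : Fin 5, i ≠ j ∧ i ≠ k ∧ j ≠ k := by
    revert i; decide
  have key : ∀ m : Fin 5, i ≠ m → σ i = τ i ∨ σ i = τ m := by
    intro m him
    have hc : ({i, m} : Finset (Fin 5)).card = 2 := Finset.card_pair him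
    have := congrArg (fun e : Petersen ≃g Petersen => (e ⟨{i, m}, hc⟩).1) h
    simp only [petmap_apply] at this
    have hmem : σ i ∈ ({i, m} : Finset (Fin 5)).image σ :=
      Finset.mem_image_of_mem σ (Finset.mem_insert_self _ _)
    rw [this] at hmem
    simp only [Finset.image_insert, Finset.image_singleton, Finset.mem_insert,
      Finset.mem_singleton] at hmem
    exact hmem
  rcases key j hij with h1 | h1
  · exact h1
  rcases key k hik with h2 | h2
  · exact h2
  exact absurd (τ.injective (h1.symm.trans h2)) hjk

/-- the automorphism group of the Petersen graph is isomorphic to the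
symmetric group `S₅`. -/
theorem petersen_automorphism_group :
    Nonempty ((Petersen ≃g Petersen) ≃* Equiv.Perm (Fin 5)) := by
  have hmul : ∀ σ τ : Equiv.Perm (Fin 5), petmap (σ * τ) = petmap σ * petmap τ := by
    intro σ τ
    apply RelIso.ext
    intro s
    apply Subtype.ext
    show (petmap (σ * τ) s).1 = (petmap σ (petmap τ s)).1
    rw [petmap_apply, petmap_apply, petmap_apply, Finset.image_image]
    rfl
  let Φ : Equiv.Perm (Fin 5) →* (Petersen ≃g Petersen) :=
    { toFun := petmap
      map_one' := by
        apply RelIso.ext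
        intro s
        apply Subtype.ext
        rw [petmap_apply]
        simp
      map_mul' := hmul }
  exact ⟨(MulEquiv.ofBijective Φ ⟨petmap_injective, petmap_surjective⟩).symm⟩
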